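/- (Quantum Crooks fluctuation theorem) Let N be a quantum channel on d×d complex matrices, γ a positive-definite density matrix with N(γ) positive definite, R_γ the Petz recovery map, and ρ a density matrix with ρ and N(ρ) positive definite. With eigenbases as above, define the forward quasi-probability P^{μ,ν}_{→,ij,k'l'} = p_μ ⟨φ'_ν| Π_{k'} N(Π_i |ψ_μ⟩⟨ψ_μ| Π_j) Π_{l'} |φ'_ν⟩ and the backward quasi-probability P^{μ,ν}_{←,ij,k'l'} = p'_ν ⟨ψ_μ| Π_i R_γ(Π_{k'} |φ'_ν⟩⟨φ'_ν| Π_{l'}) Π_j |ψ_μ⟩, and the real entropy productions σ_R(μ,i,j,ν,k',l') = (log p_μ − log p'_ν) − (1/2)log(r_i r_j/(r'_{k'} r'_{l'})) for the forward process and σ̃_R(μ,i,j,ν,k',l') = (log p'_ν − log p_μ) − (1/2)log(r'_{k'} r'_{l'}/(r_i r_j)) for the backward process. Then for every real s: ∑_{tuples with σ_R = s} P^{μ,ν}_{→,ij,k'l'} = e^{s} · ∑_{tuples with σ̃_R = −s} P^{μ,ν}_{←,ij,k'l'}; i.e., P_→(σ)/P_←(−σ) = e^{σ}. -/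

import Mathlib

open Matrix
open scoped ComplexOrder

/-- ⟨v|A|w⟩ -/
noncomputable def braket {d : ℕ} (v : Fin d → ℂ) (A : Matrix (Fin d) (Fin d) ℂ)
    (w : Fin d → ℂ) : ℂ :=
  dotProduct (star v) (A.mulVec w)

/-- |v⟩⟨w| -/
noncomputable def ketbra {d : ℕ} (v w : Fin d → ℂ) : Matrix (Fin d) (Fin d) ℂ :=
  Matrix.vecMulVec v (star w)

/-- A quantum channel in Kraus form: N(X) = ∑ m, K m * X * (K m)ᴴ. -/
noncomputable def krausMap {d : ℕ} {ι : Type} [Fintype ι] (K : ι → Matrix (Fin d) (Fin d) ℂ)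
    (X : Matrix (Fin d) (Fin d) ℂ) : Matrix (Fin d) (Fin d) ℂ :=
  ∑ m, K m * X * (K m)ᴴ

/-- The adjoint map: N†(X) = ∑ m, (K m)ᴴ * X * K m. -/
noncomputable def krausAdj {d : ℕ} {ι : Type} [Fintype ι] (K : ι → Matrix (Fin d) (Fin d) ℂ)
    (X : Matrix (Fin d) (Fin d) ℂ) : Matrix (Fin d) (Fin d) ℂ :=
  ∑ m, (K m)ᴴ * X * K m

/-- An orthonormal family of vectors in ℂ^d. -/
def IsONB {d : ℕ} (e : Fin d → Fin d → ℂ) : Prop :=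
  ∀ i j, dotProduct (star (e i)) (e j) = if i = j then 1 else 0

/-- For A = ∑ i, r i • |e i⟩⟨e i| with `e` orthonormal and `r` positive, the complex
matrix power A^z = exp (z log A) is given by A^z = ∑ i, (r i)^z • |e i⟩⟨e i|. -/
noncomputable def projPow {d : ℕ} (r : Fin d → ℝ) (e : Fin d → Fin d → ℂ) (z : ℂ) :
    Matrix (Fin d) (Fin d) ℂ :=
  ∑ i, ((r i : ℂ) ^ z) • ketbra (e i) (e i)

/-- The two-point-measurement quasi-probability
P^{μ,ν}_{ij,k'l'} = p_μ ⟨φ'_ν| Π_{k'} N(Π_i |ψ_μ⟩⟨ψ_μ| Π_j) Π_{l'} |φ'_ν⟩. -/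
noncomputable def tpmP {d : ℕ} {ι : Type} [Fintype ι] (K : ι → Matrix (Fin d) (Fin d) ℂ)
    (p : Fin d → ℝ) (ψ : Fin d → Fin d → ℂ) (φ : Fin d → Fin d → ℂ)
    (e : Fin d → Fin d → ℂ) (f : Fin d → Fin d → ℂ)
    (μ ν i j k l : Fin d) : ℂ :=
  (p μ : ℂ) *
    braket (φ ν)
      (ketbra (f k) (f k) *
        krausMap K (ketbra (e i) (e i) * ketbra (ψ μ) (ψ μ) * ketbra (e j) (e j)) *
        ketbra (f l) (f l))
      (φ ν)

/-- The Petz recovery map, expressed through the eigendecompositions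
γ = ∑ r_i |i⟩⟨i| and N(γ) = ∑ r'_k |k'⟩⟨k'|:
R_γ(X) = γ^{1/2} N†(N(γ)^{-1/2} X N(γ)^{-1/2}) γ^{1/2}. -/
noncomputable def petzB {d : ℕ} {ι : Type} [Fintype ι] (K : ι → Matrix (Fin d) (Fin d) ℂ)
    (r : Fin d → ℝ) (e : Fin d → Fin d → ℂ) (r' : Fin d → ℝ) (f : Fin d → Fin d → ℂ)
    (X : Matrix (Fin d) (Fin d) ℂ) : Matrix (Fin d) (Fin d) ℂ :=
  projPow r e (1/2) * krausAdj K (projPow r' f (-(1/2)) * X * projPow r' f (-(1/2))) *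
    projPow r e (1/2)

/-- The backward two-point-measurement quasi-probability
P^{μ,ν}_{←,ij,k'l'} = p'_ν ⟨ψ_μ| Π_i R(Π_{k'} |φ'_ν⟩⟨φ'_ν| Π_{l'}) Π_j |ψ_μ⟩
for a backward (recovery) channel R. -/
noncomputable def tpmPback {d : ℕ} (R : Matrix (Fin d) (Fin d) ℂ → Matrix (Fin d) (Fin d) ℂ)
    (p' : Fin d → ℝ) (ψ : Fin d → Fin d → ℂ) (φ : Fin d → Fin d → ℂ)
    (e : Fin d → Fin d → ℂ) (f : Fin d → Fin d → ℂ)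
    (μ ν i j k l : Fin d) : ℂ :=
  (p' ν : ℂ) *
    braket (ψ μ)
      (ketbra (e i) (e i) *
        R (ketbra (f k) (f k) * ketbra (φ ν) (φ ν) * ketbra (f l) (f l)) *
        ketbra (e j) (e j))
      (ψ μ)


section helpers
variable {d : ℕ} {ι : Type} [Fintype ι]

lemma ketbra_mul_ketbra (a b c g : Fin d → ℂ) :
    ketbra a b * ketbra c g = (dotProduct (star b) c) • ketbra a g := by
  ext x y
  simp only [ketbra, Matrix.mul_apply, Matrix.vecMulVec_apply, Matrix.smul_apply,
    dotProduct, smul_eq_mul, Finset.sum_mul]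
  exact Finset.sum_congr rfl fun z _ => by ring

lemma mul_ketbra (M : Matrix (Fin d) (Fin d) ℂ) (a b : Fin d → ℂ) :
    M * ketbra a b = ketbra (M *ᵥ a) b := by
  ext x y
  simp only [ketbra, Matrix.mul_apply, Matrix.vecMulVec_apply, Matrix.mulVec,
    dotProduct, Finset.sum_mul]
  exact Finset.sum_congr rfl fun z _ => by ring

lemma ketbra_mul (M : Matrix (Fin d) (Fin d) ℂ) (a b : Fin d → ℂ) :
    ketbra a b * M = ketbra a (Mᴴ *ᵥ b) := by
  ext x y
  simp only [ketbra, Matrix.mul_apply, Matrix.vecMulVec_apply, Matrix.mulVec,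
    dotProduct, Pi.star_apply, Matrix.conjTranspose_apply, star_sum, star_mul',
    star_star, Finset.mul_sum]
  exact Finset.sum_congr rfl fun z _ => by ring

lemma braket_smul (v w : Fin d → ℂ) (c : ℂ) (M : Matrix (Fin d) (Fin d) ℂ) :
    braket v (c • M) w = c * braket v M w := by
  simp [braket, Matrix.smul_mulVec, dotProduct_smul, smul_eq_mul]

lemma braket_add (v w : Fin d → ℂ) (A B : Matrix (Fin d) (Fin d) ℂ) :
    braket v (A + B) w = braket v A w + braket v B w := by
  simp [braket, Matrix.add_mulVec, dotProduct_add]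

lemma braket_sum {α : Type*} (t : Finset α) (v w : Fin d → ℂ) (M : α → Matrix (Fin d) (Fin d) ℂ) :
    braket v (∑ m ∈ t, M m) w = ∑ m ∈ t, braket v (M m) w := by
  classical
  induction t using Finset.induction_on with
  | empty => simp [braket]
  | insert _ _ h ih => rw [Finset.sum_insert h, Finset.sum_insert h, braket_add, ih]

lemma braket_ketbra (v w a b : Fin d → ℂ) :
    braket v (ketbra a b) w = (dotProduct (star v) a) * (dotProduct (star b) w) := by
  simp only [braket, ketbra, Matrix.mulVec, dotProduct, Matrix.vecMulVec_apply,
    Finset.mul_sum, Finset.sum_mul]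
  rw [Finset.sum_comm]
  refine Finset.sum_congr rfl fun x _ => Finset.sum_congr rfl fun y _ => by ring

lemma projPow_mul_ketbra {r : Fin d → ℝ} {e : Fin d → Fin d → ℂ} (he : IsONB e)
    (z : ℂ) (i : Fin d) (w : Fin d → ℂ) :
    projPow r e z * ketbra (e i) w = ((r i : ℂ) ^ z) • ketbra (e i) w := by
  unfold projPow
  rw [Finset.sum_mul]
  have : ∀ a, ((r a : ℂ) ^ z) • ketbra (e a) (e a) * ketbra (e i) w
      = if a = i then ((r a : ℂ) ^ z) • ketbra (e a) w else 0 := by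
    intro a
    rw [smul_mul_assoc, ketbra_mul_ketbra, he a i, smul_smul]
    split <;> simp [mul_comm]
  simp only [this]
  rw [Finset.sum_ite_eq' Finset.univ i]
  simp

lemma ketbra_mul_projPow {r : Fin d → ℝ} {e : Fin d → Fin d → ℂ} (he : IsONB e)
    (z : ℂ) (i : Fin d) (w : Fin d → ℂ) :
    ketbra w (e i) * projPow r e z = ((r i : ℂ) ^ z) • ketbra w (e i) := by
  unfold projPow
  rw [Finset.mul_sum]
  have : ∀ a, ketbra w (e i) * (((r a : ℂ) ^ z) • ketbra (e a) (e a))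
      = if i = a then ((r a : ℂ) ^ z) • ketbra w (e a) else 0 := by
    intro a
    rw [mul_smul_comm, ketbra_mul_ketbra, he i a, smul_smul]
    split <;> simp [mul_comm]
  simp only [this]
  rw [Finset.sum_ite_eq Finset.univ i]
  simp

lemma krausMap_smul (K : ι → Matrix (Fin d) (Fin d) ℂ) (c : ℂ) (X : Matrix (Fin d) (Fin d) ℂ) :
    krausMap K (c • X) = c • krausMap K X := by
  simp [krausMap, Finset.smul_sum, mul_smul_comm, smul_mul_assoc]

lemma krausAdj_smul (K : ι → Matrix (Fin d) (Fin d) ℂ) (c : ℂ) (X : Matrix (Fin d) (Fin d) ℂ) :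
    krausAdj K (c • X) = c • krausAdj K X := by
  simp [krausAdj, Finset.smul_sum, mul_smul_comm, smul_mul_assoc]

lemma krausMap_ketbra (K : ι → Matrix (Fin d) (Fin d) ℂ) (a b : Fin d → ℂ) :
    krausMap K (ketbra a b) = ∑ m, ketbra (K m *ᵥ a) (K m *ᵥ b) := by
  unfold krausMap
  refine Finset.sum_congr rfl fun m _ => ?_
  rw [mul_ketbra, ketbra_mul, Matrix.conjTranspose_conjTranspose]

lemma krausAdj_ketbra (K : ι → Matrix (Fin d) (Fin d) ℂ) (a b : Fin d → ℂ) :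
    krausAdj K (ketbra a b) = ∑ m, ketbra ((K m)ᴴ *ᵥ a) ((K m)ᴴ *ᵥ b) := by
  unfold krausAdj
  refine Finset.sum_congr rfl fun m _ => ?_
  rw [mul_ketbra, ketbra_mul]

lemma adj_dot (M : Matrix (Fin d) (Fin d) ℂ) (a b : Fin d → ℂ) :
    dotProduct (star a) (Mᴴ *ᵥ b) = dotProduct (star (M *ᵥ a)) b := by
  rw [Matrix.dotProduct_mulVec, Matrix.star_mulVec]

end helpers
section helpers2
variable {d : ℕ} {ι : Type} [Fintype ι]

lemma matsum_mulVec {α : Type*} (t : Finset α) (M : α → Matrix (Fin d) (Fin d) ℂ)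
    (v : Fin d → ℂ) : (∑ m ∈ t, M m) *ᵥ v = ∑ m ∈ t, (M m *ᵥ v) := by
  ext x
  simp only [Matrix.mulVec, dotProduct, Matrix.sum_apply, Finset.sum_mul,
    Finset.sum_apply]
  exact Finset.sum_comm

lemma dot_sum {α : Type*} (t : Finset α) (v : Fin d → ℂ) (w : α → Fin d → ℂ) :
    dotProduct v (∑ m ∈ t, w m) = ∑ m ∈ t, dotProduct v (w m) := by
  simp only [dotProduct, Finset.sum_apply, Finset.mul_sum]
  exact Finset.sum_comm

lemma sandwich (a b : Fin d → ℂ) (M : Matrix (Fin d) (Fin d) ℂ) :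
    ketbra a a * M * ketbra b b = (braket a M b) • ketbra a b := by
  rw [ketbra_mul, ketbra_mul_ketbra, ← adj_dot, Matrix.conjTranspose_conjTranspose]
  rfl

lemma ketbra_mulVec (a b w : Fin d → ℂ) :
    ketbra a b *ᵥ w = (dotProduct (star b) w) • a := by
  ext x
  simp only [ketbra, Matrix.mulVec, dotProduct, Matrix.vecMulVec_apply, Pi.smul_apply,
    smul_eq_mul, Finset.sum_mul]
  exact Finset.sum_congr rfl fun z _ => by ring

lemma dot_projPow {r : Fin d → ℝ} {e : Fin d → Fin d → ℂ} (he : IsONB e) (z : ℂ)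
    (i : Fin d) (u : Fin d → ℂ) :
    dotProduct (star (e i)) (projPow r e z *ᵥ u) =
      ((r i : ℂ) ^ z) * dotProduct (star (e i)) u := by
  unfold projPow
  rw [matsum_mulVec]
  simp only [Matrix.smul_mulVec, ketbra_mulVec, smul_smul]
  rw [dot_sum]
  have : ∀ a, dotProduct (star (e i))
        (((r a : ℂ) ^ z * dotProduct (star (e a)) u) • e a)
      = if a = i then ((r i : ℂ) ^ z) * dotProduct (star (e i)) u else 0 := by
    intro a
    rw [dotProduct_smul, he i a, smul_eq_mul]
    rcases eq_or_ne a i with h | h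
    · subst h; simp
    · simp [h, Ne.symm h]
  simp only [this]
  rw [Finset.sum_ite_eq' Finset.univ i]
  simp

lemma projPow_mulVec {r : Fin d → ℝ} {e : Fin d → Fin d → ℂ} (he : IsONB e) (z : ℂ)
    (j : Fin d) :
    projPow r e z *ᵥ e j = ((r j : ℂ) ^ z) • e j := by
  unfold projPow
  rw [matsum_mulVec]
  simp only [Matrix.smul_mulVec, ketbra_mulVec, smul_smul]
  have : ∀ a, ((r a : ℂ) ^ z * dotProduct (star (e a)) (e j)) • e a
      = if a = j then ((r j : ℂ) ^ z) • e j else 0 := by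
    intro a
    rw [he a j]
    rcases eq_or_ne a j with h | h
    · subst h; simp
    · simp [h]
  simp only [this]
  rw [Finset.sum_ite_eq' Finset.univ j]
  simp

lemma braket_projPow_sandwich {r : Fin d → ℝ} {e : Fin d → Fin d → ℂ} (he : IsONB e)
    (z z' : ℂ) (i j : Fin d) (M : Matrix (Fin d) (Fin d) ℂ) :
    braket (e i) (projPow r e z * M * projPow r e z') (e j) =
      ((r i : ℂ) ^ z) * ((r j : ℂ) ^ z') * braket (e i) M (e j) := by
  unfold braket
  rw [← Matrix.mulVec_mulVec, projPow_mulVec he, Matrix.mulVec_smul, dotProduct_smul,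
    ← Matrix.mulVec_mulVec, dot_projPow he]
  simp [smul_eq_mul]; ring

end helpers2
section main
variable {d : ℕ} {ι : Type} [Fintype ι]

lemma tpmP_eq (K : ι → Matrix (Fin d) (Fin d) ℂ) (p : Fin d → ℝ)
    (ψ φ e f : Fin d → Fin d → ℂ) (μ ν i j k l : Fin d) :
    tpmP K p ψ φ e f μ ν i j k l =
      (p μ : ℂ) * ((dotProduct (star (e i)) (ψ μ)) * (dotProduct (star (ψ μ)) (e j))) *
        ((dotProduct (star (φ ν)) (f k)) * (dotProduct (star (f l)) (φ ν))) *
        ∑ m, (dotProduct (star (f k)) (K m *ᵥ e i)) *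
          (dotProduct (star (K m *ᵥ e j)) (f l)) := by
  unfold tpmP
  rw [sandwich (f k) (f l), braket_smul, braket_ketbra (φ ν),
    sandwich (e i) (e j), braket_ketbra (e i), krausMap_smul, braket_smul,
    krausMap_ketbra, braket_sum]
  simp only [braket_ketbra]
  ring

lemma tpmPback_eq (K : ι → Matrix (Fin d) (Fin d) ℂ) (r : Fin d → ℝ) (r' : Fin d → ℝ)
    (p' : Fin d → ℝ) (ψ φ e f : Fin d → Fin d → ℂ) (he : IsONB e) (hf : IsONB f)
    (μ ν i j k l : Fin d) :
    tpmPback (petzB K r e r' f) p' ψ φ e f μ ν i j k l =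
      (p' ν : ℂ) * ((r i : ℂ) ^ ((1:ℂ)/2) * (r j : ℂ) ^ ((1:ℂ)/2) *
          (r' k : ℂ) ^ (-((1:ℂ)/2)) * (r' l : ℂ) ^ (-((1:ℂ)/2))) *
        ((dotProduct (star (ψ μ)) (e i)) * (dotProduct (star (e j)) (ψ μ))) *
        ((dotProduct (star (f k)) (φ ν)) * (dotProduct (star (φ ν)) (f l))) *
        ∑ m, (dotProduct (star (e i)) ((K m)ᴴ *ᵥ f k)) *
          (dotProduct (star ((K m)ᴴ *ᵥ f l)) (e j)) := by
  unfold tpmPback petzB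
  rw [sandwich (e i) (e j), braket_smul, braket_ketbra (ψ μ),
    braket_projPow_sandwich he,
    sandwich (f k) (f l), braket_ketbra (f k),
    mul_smul_comm, smul_mul_assoc, krausAdj_smul, braket_smul,
    projPow_mul_ketbra hf, smul_mul_assoc, ketbra_mul_projPow hf, smul_smul,
    krausAdj_smul, braket_smul, krausAdj_ketbra, braket_sum]
  simp only [braket_ketbra]
  ring

end main
section scalars

lemma real_scalar_key (P Q a b c' d' : ℝ) (hP : 0 < P) (hQ : 0 < Q)
    (ha : 0 < a) (hb : 0 < b) (hc : 0 < c') (hd : 0 < d') :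
    P = Real.exp ((Real.log P - Real.log Q) - 1/2 * Real.log (a * b / (c' * d'))) *
      (Q * (a ^ ((1:ℝ)/2) * b ^ ((1:ℝ)/2) * c' ^ (-((1:ℝ)/2)) * d' ^ (-((1:ℝ)/2)))) := by
  have hQpos : (0:ℝ) < a * b / (c' * d') := by positivity
  have h1 : Real.exp (1/2 * Real.log (a * b / (c' * d'))) = (a * b / (c' * d')) ^ ((1:ℝ)/2) := by
    rw [Real.rpow_def_of_pos hQpos, mul_comm]
  rw [sub_sub, Real.exp_sub, Real.exp_log hP, Real.exp_add, Real.exp_log hQ, h1]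
  rw [Real.div_rpow (by positivity) (by positivity), Real.mul_rpow ha.le hb.le,
    Real.mul_rpow hc.le hd.le, Real.rpow_neg hc.le, Real.rpow_neg hd.le]
  have h2 : a ^ ((1:ℝ)/2) ≠ 0 := (Real.rpow_pos_of_pos ha _).ne'
  have h3 : b ^ ((1:ℝ)/2) ≠ 0 := (Real.rpow_pos_of_pos hb _).ne'
  have h4 : c' ^ ((1:ℝ)/2) ≠ 0 := (Real.rpow_pos_of_pos hc _).ne'
  have h5 : d' ^ ((1:ℝ)/2) ≠ 0 := (Real.rpow_pos_of_pos hd _).ne'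
  field_simp

lemma complex_scalar_key (P Q a b c' d' : ℝ) (hP : 0 < P) (hQ : 0 < Q)
    (ha : 0 < a) (hb : 0 < b) (hc : 0 < c') (hd : 0 < d') :
    (P : ℂ) = Complex.exp ((((Real.log P - Real.log Q) -
        1/2 * Real.log (a * b / (c' * d')) : ℝ)) : ℂ) *
      ((Q : ℂ) * ((a : ℂ) ^ ((1:ℂ)/2) * (b : ℂ) ^ ((1:ℂ)/2) *
        (c' : ℂ) ^ (-((1:ℂ)/2)) * (d' : ℂ) ^ (-((1:ℂ)/2)))) := by
  have ea : (a : ℂ) ^ ((1:ℂ)/2) = ((a ^ ((1:ℝ)/2) : ℝ) : ℂ) := by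
    rw [Complex.ofReal_cpow ha.le]; norm_num
  have eb : (b : ℂ) ^ ((1:ℂ)/2) = ((b ^ ((1:ℝ)/2) : ℝ) : ℂ) := by
    rw [Complex.ofReal_cpow hb.le]; norm_num
  have ec : (c' : ℂ) ^ (-((1:ℂ)/2)) = ((c' ^ (-((1:ℝ)/2)) : ℝ) : ℂ) := by
    rw [Complex.ofReal_cpow hc.le]; norm_num
  have ed : (d' : ℂ) ^ (-((1:ℂ)/2)) = ((d' ^ (-((1:ℝ)/2)) : ℝ) : ℂ) := by
    rw [Complex.ofReal_cpow hd.le]; norm_num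
  rw [ea, eb, ec, ed, ← Complex.ofReal_exp]
  exact_mod_cast real_scalar_key P Q a b c' d' hP hQ ha hb hc hd

end scalars
section term
variable {d : ℕ} {ι : Type} [Fintype ι]

lemma term_identity (K : ι → Matrix (Fin d) (Fin d) ℂ)
    (r : Fin d → ℝ) (e : Fin d → Fin d → ℂ) (hr : ∀ i, 0 < r i) (he : IsONB e)
    (r' : Fin d → ℝ) (f : Fin d → Fin d → ℂ) (hr' : ∀ k, 0 < r' k) (hf : IsONB f)
    (p : Fin d → ℝ) (ψ : Fin d → Fin d → ℂ) (hp : ∀ μ, 0 < p μ)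
    (p' : Fin d → ℝ) (φ : Fin d → Fin d → ℂ) (hp' : ∀ ν, 0 < p' ν)
    (μ ν i j k l : Fin d) :
    tpmP K p ψ φ e f μ ν i j k l =
      Complex.exp ((((Real.log (p μ) - Real.log (p' ν)) -
          1/2 * Real.log (r i * r j / (r' k * r' l)) : ℝ)) : ℂ) *
        tpmPback (petzB K r e r' f) p' ψ φ e f μ ν j i l k := by
  rw [tpmP_eq, tpmPback_eq K r r' p' ψ φ e f he hf μ ν j i l k]
  have hsum : ∀ m : ι,
      (dotProduct (star (e j)) ((K m)ᴴ *ᵥ f l)) *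
        (dotProduct (star ((K m)ᴴ *ᵥ f k)) (e i))
      = (dotProduct (star (f k)) (K m *ᵥ e i)) *
        (dotProduct (star (K m *ᵥ e j)) (f l)) := by
    intro m
    rw [adj_dot, ← adj_dot ((K m)ᴴ), Matrix.conjTranspose_conjTranspose]
    ring
  simp only [hsum]
  rw [complex_scalar_key (p μ) (p' ν) (r i) (r j) (r' k) (r' l)
    (hp μ) (hp' ν) (hr i) (hr j) (hr' k) (hr' l)]
  ring

lemma sum2_swap {α : Type*} [Fintype α] (H : α → α → ℂ) :
    ∑ k : α, ∑ l : α, H l k = ∑ k : α, ∑ l : α, H k l :=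
  Finset.sum_comm

lemma sum4_swap {α : Type*} [Fintype α] (H : α → α → α → α → ℂ) :
    ∑ i : α, ∑ j : α, ∑ k : α, ∑ l : α, H j i l k =
      ∑ i : α, ∑ j : α, ∑ k : α, ∑ l : α, H i j k l := by
  rw [sum2_swap (fun a b => ∑ k : α, ∑ l : α, H a b l k)]
  exact Finset.sum_congr rfl fun i _ => Finset.sum_congr rfl fun j _ =>
    sum2_swap (fun a b => H i j a b)

end term
/-- quantum Crooks fluctuation theorem, P_→(σ) = e^σ P_←(−σ). -/
theorem quantum_crooks_fluctuation_theorem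
    {d : ℕ} {ι : Type} [Fintype ι] (K : ι → Matrix (Fin d) (Fin d) ℂ)
    (hK : ∑ m, (K m)ᴴ * K m = 1)
    (r : Fin d → ℝ) (e : Fin d → Fin d → ℂ) (hr : ∀ i, 0 < r i) (he : IsONB e)
    (hrtr : ∑ i, r i = 1)
    (r' : Fin d → ℝ) (f : Fin d → Fin d → ℂ) (hr' : ∀ k, 0 < r' k) (hf : IsONB f)
    (hNγ : krausMap K (∑ i, ((r i : ℂ)) • ketbra (e i) (e i)) =
      ∑ k, ((r' k : ℂ)) • ketbra (f k) (f k))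
    (ρ : Matrix (Fin d) (Fin d) ℂ)
    (p : Fin d → ℝ) (ψ : Fin d → Fin d → ℂ) (hp : ∀ μ, 0 < p μ) (hψ : IsONB ψ)
    (hρ : ρ = ∑ μ, ((p μ : ℂ)) • ketbra (ψ μ) (ψ μ))
    (p' : Fin d → ℝ) (φ : Fin d → Fin d → ℂ) (hp' : ∀ ν, 0 < p' ν) (hφ : IsONB φ)
    (hNρ : krausMap K ρ = ∑ ν, ((p' ν : ℂ)) • ketbra (φ ν) (φ ν)) :
    ∀ s : ℝ,
      (∑ μ, ∑ ν, ∑ i, ∑ j, ∑ k, ∑ l,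
        if (Real.log (p μ) - Real.log (p' ν)) -
            1/2 * Real.log (r i * r j / (r' k * r' l)) = s then
          tpmP K p ψ φ e f μ ν i j k l
        else 0) =
      Complex.exp (s : ℂ) *
        (∑ μ, ∑ ν, ∑ i, ∑ j, ∑ k, ∑ l,
          if (Real.log (p' ν) - Real.log (p μ)) -
              1/2 * Real.log (r' k * r' l / (r i * r j)) = -s then
            tpmPback (petzB K r e r' f) p' ψ φ e f μ ν i j k l
          else 0) := by
  intro s
  have hcond : ∀ μ ν i j k l : Fin d,
      ((Real.log (p' ν) - Real.log (p μ)) -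
        1/2 * Real.log (r' l * r' k / (r j * r i)) = -s) ↔
      ((Real.log (p μ) - Real.log (p' ν)) -
        1/2 * Real.log (r i * r j / (r' k * r' l)) = s) := by
    intro μ ν i j k l
    have h1 : (Real.log (p' ν) - Real.log (p μ)) -
        1/2 * Real.log (r' l * r' k / (r j * r i))
        = -((Real.log (p μ) - Real.log (p' ν)) -
            1/2 * Real.log (r i * r j / (r' k * r' l))) := by
      rw [Real.log_div (mul_pos (hr' l) (hr' k)).ne' (mul_pos (hr j) (hr i)).ne',
          Real.log_div (mul_pos (hr i) (hr j)).ne' (mul_pos (hr' k) (hr' l)).ne',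
          mul_comm (r' l) (r' k), mul_comm (r j) (r i)]
      ring
    rw [h1]
    exact neg_inj
  have key : ∀ μ ν i j k l : Fin d,
      (if (Real.log (p μ) - Real.log (p' ν)) -
          1/2 * Real.log (r i * r j / (r' k * r' l)) = s then
        tpmP K p ψ φ e f μ ν i j k l else 0)
      = Complex.exp (s : ℂ) *
        (if (Real.log (p' ν) - Real.log (p μ)) -
            1/2 * Real.log (r' l * r' k / (r j * r i)) = -s then
          tpmPback (petzB K r e r' f) p' ψ φ e f μ ν j i l k else 0) := by
    intro μ ν i j k l
    by_cases h : (Real.log (p μ) - Real.log (p' ν)) -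
        1/2 * Real.log (r i * r j / (r' k * r' l)) = s
    · rw [if_pos h, if_pos ((hcond μ ν i j k l).mpr h)]
      rw [term_identity K r e hr he r' f hr' hf p ψ hp p' φ hp' μ ν i j k l]
      rw [h]
    · rw [if_neg h, if_neg (fun hc => h ((hcond μ ν i j k l).mp hc)), mul_zero]
  simp only [Finset.mul_sum]
  refine Finset.sum_congr rfl fun μ _ => Finset.sum_congr rfl fun ν _ => ?_
  trans (∑ i, ∑ j, ∑ k, ∑ l, Complex.exp (s : ℂ) *
      (if (Real.log (p' ν) - Real.log (p μ)) -
          1/2 * Real.log (r' l * r' k / (r j * r i)) = -s then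
        tpmPback (petzB K r e r' f) p' ψ φ e f μ ν j i l k else 0))
  · exact Finset.sum_congr rfl fun i _ => Finset.sum_congr rfl fun j _ =>
      Finset.sum_congr rfl fun k _ => Finset.sum_congr rfl fun l _ => key μ ν i j k l
  · exact sum4_swap (fun i j k l => Complex.exp (s : ℂ) *
      if (Real.log (p' ν) - Real.log (p μ)) -
          1/2 * Real.log (r' k * r' l / (r i * r j)) = -s then
        tpmPback (petzB K r e r' f) p' ψ φ e f μ ν i j k l else 0)
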